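/- (Error-accumulation bound for inexact DANE+, convex case.) Let A_r, B_r, C_r ≥ 0 and 0 < q < 1 with q = λ/(λ+μ), and suppose the sequence Q_R := A_0 + (2/(μ+λ)) Σ_{r=1}^R √(C_r A_r)/q^r satisfies A_R/q^R ≤ Q_R for all R ≥ 1. Then Q_R ≤ 2A_0 + (4/(μ+λ)²) (Σ_{r=1}^R √(C_r/q^r))². -/

import Mathlib

theorem stmt_19 (μ lam : ℝ) (hμ : 0 ≤ μ) (hlam : 0 < lam)
    (A C : ℕ → ℝ) (hA : ∀ r, 0 ≤ A r) (hC : ∀ r, 0 ≤ C r)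
    (q : ℝ) (hq : q = lam / (lam + μ))
    (Q : ℕ → ℝ)
    (hQ : ∀ R : ℕ, Q R = A 0 + 2 / (μ + lam) *
      ∑ r ∈ Finset.Icc 1 R, Real.sqrt (C r * A r) / q ^ r)
    (hrec : ∀ R : ℕ, 1 ≤ R → A R / q ^ R ≤ Q R) :
    ∀ R : ℕ, 1 ≤ R →
      Q R ≤ 2 * A 0 + 4 / (μ + lam) ^ 2 *
        (∑ r ∈ Finset.Icc 1 R, Real.sqrt (C r / q ^ r)) ^ 2 := by
  intro R hR
  have hM : 0 < μ + lam := by linarith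
  have hq0 : 0 < q := by
    rw [hq]; positivity
  have hmono : ∀ r : ℕ, r ≤ R → Q r ≤ Q R := by
    intro r hr
    rw [hQ r, hQ R]
    have hc : 0 ≤ 2 / (μ + lam) := by positivity
    have hsub := Finset.sum_le_sum_of_subset_of_nonneg
      (f := fun i => Real.sqrt (C i * A i) / q ^ i)
      (Finset.Icc_subset_Icc_right (a := 1) hr)
      (fun i _ _ => div_nonneg (Real.sqrt_nonneg _) (pow_pos hq0 i).le)
    exact add_le_add_right (mul_le_mul_of_nonneg_left hsub hc) _
  have hQR0 : 0 ≤ Q R := by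
    have := hmono 0 (by omega)
    rw [hQ 0] at this
    simp at this
    linarith [hA 0]
  set s := Real.sqrt (Q R) with hs
  have hs2 : s ^ 2 = Q R := Real.sq_sqrt hQR0
  set T := ∑ r ∈ Finset.Icc 1 R, Real.sqrt (C r / q ^ r) with hT
  have hT0 : 0 ≤ T := Finset.sum_nonneg fun i _ => Real.sqrt_nonneg _
  have hterm : ∀ r ∈ Finset.Icc 1 R,
      Real.sqrt (C r * A r) / q ^ r ≤ Real.sqrt (C r / q ^ r) * s := by
    intro r hr
    rw [Finset.mem_Icc] at hr
    have hqr : 0 < q ^ r := pow_pos hq0 r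
    have h1 : Real.sqrt (C r * A r)
        = Real.sqrt (C r / q ^ r) * Real.sqrt (A r / q ^ r) * q ^ r := by
      have e1 : C r * A r = (C r / q ^ r) * (A r / q ^ r) * (q ^ r) ^ 2 := by
        field_simp
      rw [e1, Real.sqrt_mul (mul_nonneg (div_nonneg (hC r) hqr.le)
        (div_nonneg (hA r) hqr.le)),
        Real.sqrt_mul (div_nonneg (hC r) hqr.le), Real.sqrt_sq hqr.le]
    rw [h1, mul_div_cancel_right₀ _ hqr.ne']
    exact mul_le_mul_of_nonneg_left
      (Real.sqrt_le_sqrt (le_trans (hrec r hr.1) (hmono r hr.2)))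
      (Real.sqrt_nonneg _)
  have hsum : Q R ≤ A 0 + 2 / (μ + lam) * (T * s) := by
    rw [hQ R]
    have hc : 0 ≤ 2 / (μ + lam) := by positivity
    have : ∑ r ∈ Finset.Icc 1 R, Real.sqrt (C r * A r) / q ^ r ≤ T * s := by
      rw [hT, Finset.sum_mul]
      exact Finset.sum_le_sum hterm
    exact add_le_add_right (mul_le_mul_of_nonneg_left this hc) _
  have hsum' : Q R * (μ + lam) ≤ A 0 * (μ + lam) + 2 * (T * s) := by
    have h := mul_le_mul_of_nonneg_right hsum hM.le
    have heq : (A 0 + 2 / (μ + lam) * (T * s)) * (μ + lam)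
        = A 0 * (μ + lam) + 2 * (T * s) := by field_simp
    linarith [h, heq.le, heq.ge]
  have key := sq_nonneg (s * (μ + lam) - 2 * T)
  have hM2 : 0 < (μ + lam) ^ 2 := by positivity
  have goal' : Q R * (μ + lam) ^ 2 ≤ 2 * A 0 * (μ + lam) ^ 2 + 4 * T ^ 2 := by
    nlinarith [mul_le_mul_of_nonneg_right hsum' hM.le, key, hs2]
  calc Q R = Q R * (μ + lam) ^ 2 / (μ + lam) ^ 2 := by field_simp
    _ ≤ (2 * A 0 * (μ + lam) ^ 2 + 4 * T ^ 2) / (μ + lam) ^ 2 := by gcongr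
    _ = 2 * A 0 + 4 / (μ + lam) ^ 2 * T ^ 2 := by
      field_simp
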